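/- Orbit size comparison: Let μ_k be a partition of [n] with exactly one block of size k (k ≥ 2) whose other blocks all have size < k, and for ℓ < k let μ_ℓ be obtained from μ_k by splitting the k-block into one highlighted ℓ-block and k−ℓ singletons. Let M_{ℓ+1} and M_ℓ be the orbits of μ_{ℓ+1} and μ_ℓ (as highlighted partitions) under the symmetric group S_n. If μ_ℓ has at least c·n non-highlighted singletons (c > 0 constant) and all blocks have size O(1), then |M_{ℓ+1}| ≥ Ω(n)·|M_ℓ|. -/

import Mathlib

open scoped BigOperators Classical

/-- A highlighted partition of `[n]`: a family of blocks together with a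
distinguished block. -/
abbrev HPart (n : ℕ) := Finset (Finset (Fin n)) × Finset (Fin n)

/-- `s` is a partition of `[n]`: blocks are nonempty and every element lies in a
unique block. -/
def IsPartitionOf (n : ℕ) (s : Finset (Finset (Fin n))) : Prop :=
  (∀ b ∈ s, b.Nonempty) ∧ ∀ j : Fin n, ∃! b, b ∈ s ∧ j ∈ b

/-- Action of a permutation of `[n]` on a highlighted partition. -/
noncomputable def permAct {n : ℕ} (π : Equiv.Perm (Fin n)) (p : HPart n) : HPart n :=
  (p.1.image (Finset.image π), p.2.image π)

/-- The orbit of a highlighted partition under the symmetric group `S_n`. -/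
noncomputable def hOrbit {n : ℕ} (p : HPart n) : Finset (HPart n) :=
  Finset.univ.filter (fun p' => ∃ π : Equiv.Perm (Fin n), permAct π p = p')

namespace Stmt15
variable {n : ℕ}

noncomputable def merge (p : HPart n) (j : Fin n) : HPart n :=
  (insert (insert j p.2) ((p.1.erase {j}).erase p.2), insert j p.2)

noncomputable def splitF (q : HPart n) (j : Fin n) : HPart n :=
  (insert {j} (insert (q.2.erase j) (q.1.erase q.2)), q.2.erase j)

lemma permAct_comp (σ π : Equiv.Perm (Fin n)) (p : HPart n) :
    permAct σ (permAct π p) = permAct (σ * π) p := by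
  unfold permAct
  simp [Finset.image_image, Function.comp_def]

lemma permAct_one (p : HPart n) : permAct 1 p = p := by
  have h : (Finset.image (id : Fin n → Fin n)) = id := funext fun s => Finset.image_id
  unfold permAct
  simp [h]

lemma mem_hOrbit_iff {p q : HPart n} : q ∈ hOrbit p ↔ ∃ π, permAct π p = q := by
  simp [hOrbit]

lemma permAct_partition (π : Equiv.Perm (Fin n)) {s : Finset (Finset (Fin n))}
    (h : IsPartitionOf n s) : IsPartitionOf n (s.image (Finset.image π)) := by
  constructor
  · rintro b hb
    rcases Finset.mem_image.1 hb with ⟨a, ha, rfl⟩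
    exact (h.1 a ha).image π
  · intro j
    obtain ⟨b, ⟨hb, hjb⟩, hu⟩ := h.2 (π.symm j)
    refine ⟨b.image π, ⟨Finset.mem_image_of_mem _ hb, ?_⟩, ?_⟩
    · exact Finset.mem_image.2 ⟨π.symm j, hjb, π.apply_symm_apply j⟩
    · rintro c ⟨hc, hjc⟩
      rcases Finset.mem_image.1 hc with ⟨a, ha, rfl⟩
      rcases Finset.mem_image.1 hjc with ⟨x, hx, hxj⟩
      have : x = π.symm j := by simpa using congrArg π.symm hxj
      subst this
      exact congrArg _ (hu a ⟨ha, hx⟩)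

lemma merge_permAct (σ : Equiv.Perm (Fin n)) (p : HPart n) (j : Fin n) :
    permAct σ (merge p j) = merge (permAct σ p) (σ j) := by
  have hinj : Function.Injective (Finset.image σ : Finset (Fin n) → Finset (Fin n)) :=
    Finset.image_injective σ.injective
  unfold permAct merge
  simp [Finset.image_insert, Finset.image_erase hinj, Finset.image_singleton]

lemma uniq {s : Finset (Finset (Fin n))} (h : IsPartitionOf n s)
    {b b' : Finset (Fin n)} {j : Fin n} (hb : b ∈ s) (hb' : b' ∈ s)
    (hj : j ∈ b) (hj' : j ∈ b') : b = b' := by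
  obtain ⟨c, _, hu⟩ := h.2 j
  rw [hu b ⟨hb, hj⟩, hu b' ⟨hb', hj'⟩]

lemma merge_recover {p : HPart n} {j : Fin n} (hpart : IsPartitionOf n p.1)
    (hhl : p.2 ∈ p.1) (hne : p.2.Nonempty) (hj : ({j} : Finset (Fin n)) ∈ p.1)
    (hjne : ({j} : Finset (Fin n)) ≠ p.2) :
    splitF (merge p j) j = p := by
  have hjp2 : j ∉ p.2 := fun h => hjne (uniq hpart hj hhl (Finset.mem_singleton_self j) h)
  have hB' : insert j p.2 ∉ p.1 := by
    intro h
    exact hjp2 (by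
      have := uniq hpart hj h (Finset.mem_singleton_self j) (Finset.mem_insert_self j p.2)
      obtain ⟨x, hx⟩ := hne
      have hx' : x ∈ insert j p.2 := Finset.mem_insert_of_mem hx
      rw [← this] at hx'
      have : x = j := Finset.mem_singleton.1 hx'
      subst this; exact absurd hx hjp2)
  have h2 : (insert j p.2).erase j = p.2 := Finset.erase_insert hjp2
  have hBS : insert j p.2 ∉ (p.1.erase {j}).erase p.2 := fun h =>
    hB' (Finset.mem_of_mem_erase (Finset.mem_of_mem_erase h))
  have h1 : ((merge p j).1).erase (insert j p.2) = (p.1.erase {j}).erase p.2 := by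
    rw [show (merge p j).1 = insert (insert j p.2) ((p.1.erase {j}).erase p.2) from rfl,
      Finset.erase_insert hBS]
  unfold splitF
  rw [show (merge p j).2 = insert j p.2 from rfl, h2, h1]
  ext b
  simp only [Finset.mem_insert, Finset.mem_erase]
  constructor
  · rintro (rfl | rfl | ⟨-, -, h⟩) <;> first | exact hj | exact hhl | exact h
  · intro hb
    by_cases h1 : b = {j}
    · exact Or.inl h1
    by_cases h2 : b = p.2
    · exact Or.inr (Or.inl h2)
    · exact Or.inr (Or.inr ⟨h2, h1, hb⟩)
  · exact Iff.rfl

section Main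
variable {ℓ : ℕ} {μ₂ μ₁ : HPart n} {i : Fin n}
variable (hpart2 : IsPartitionOf n μ₂.1) (hmem2 : μ₂.2 ∈ μ₂.1) (hi : i ∈ μ₂.2)
  (hsplit1 : μ₁.1 = insert (μ₂.2.erase i) (insert {i} (μ₂.1.erase μ₂.2)))
  (hsplit2 : μ₁.2 = μ₂.2.erase i) (hℓ : 1 ≤ ℓ) (hcard : μ₁.2.card = ℓ)

include hℓ hcard in
lemma hne1 : μ₁.2.Nonempty := Finset.card_pos.1 (by rw [hcard]; omega)

include hsplit1 hsplit2 in
lemma hmem1 : μ₁.2 ∈ μ₁.1 := by rw [hsplit1, hsplit2]; exact Finset.mem_insert_self _ _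

include hsplit1 in
lemma hiblk : ({i} : Finset (Fin n)) ∈ μ₁.1 := by
  rw [hsplit1]; exact Finset.mem_insert_of_mem (Finset.mem_insert_self _ _)

include hsplit2 in
lemma hine : ({i} : Finset (Fin n)) ≠ μ₁.2 := by
  intro h
  have : i ∈ μ₁.2 := h ▸ Finset.mem_singleton_self i
  rw [hsplit2] at this
  exact (Finset.mem_erase.1 this).1 rfl

include hpart2 hmem2 hi hsplit1 hsplit2 hℓ hcard in
lemma part1 : IsPartitionOf n μ₁.1 := by
  constructor
  · intro b hb
    rw [hsplit1] at hb
    rcases Finset.mem_insert.1 hb with rfl | hb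
    · rw [← hsplit2]; exact hne1 hℓ hcard
    rcases Finset.mem_insert.1 hb with rfl | hb
    · exact ⟨i, Finset.mem_singleton_self i⟩
    · exact hpart2.1 b (Finset.mem_of_mem_erase hb)
  · intro j
    by_cases hji : j = i
    · subst hji
      refine ⟨{j}, ⟨by rw [hsplit1]; simp, Finset.mem_singleton_self j⟩, ?_⟩
      rintro b ⟨hb, hjb⟩
      rw [hsplit1] at hb
      rcases Finset.mem_insert.1 hb with rfl | hb
      · exact absurd hjb (by simp)
      rcases Finset.mem_insert.1 hb with rfl | hb
      · rfl
      · exact absurd (uniq hpart2 (Finset.mem_of_mem_erase hb) hmem2 hjb hi)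
          (Finset.ne_of_mem_erase hb)
    by_cases hjB : j ∈ μ₂.2
    · refine ⟨μ₂.2.erase i, ⟨by rw [hsplit1]; simp, Finset.mem_erase.2 ⟨hji, hjB⟩⟩, ?_⟩
      rintro b ⟨hb, hjb⟩
      rw [hsplit1] at hb
      rcases Finset.mem_insert.1 hb with rfl | hb
      · rfl
      rcases Finset.mem_insert.1 hb with rfl | hb
      · exact absurd (Finset.mem_singleton.1 hjb) hji
      · exact absurd (uniq hpart2 (Finset.mem_of_mem_erase hb) hmem2 hjb hjB)
          (Finset.ne_of_mem_erase hb)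
    · obtain ⟨b, ⟨hb, hjb⟩, hu⟩ := hpart2.2 j
      have hbne : b ≠ μ₂.2 := fun h => hjB (h ▸ hjb)
      refine ⟨b, ⟨by
        rw [hsplit1]
        exact Finset.mem_insert_of_mem (Finset.mem_insert_of_mem
          (Finset.mem_erase.2 ⟨hbne, hb⟩)), hjb⟩, ?_⟩
      rintro b' ⟨hb', hjb'⟩
      rw [hsplit1] at hb'
      rcases Finset.mem_insert.1 hb' with rfl | hb'
      · exact absurd (Finset.mem_of_mem_erase hjb') hjB
      rcases Finset.mem_insert.1 hb' with rfl | hb'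
      · exact absurd (Finset.mem_singleton.1 hjb') hji
      · exact hu b' ⟨Finset.mem_of_mem_erase hb', hjb'⟩

include hpart2 hmem2 hi hsplit1 hsplit2 hℓ hcard in
lemma merge_eq : merge μ₁ i = μ₂ := by
  have hme : μ₂.2.erase i ∉ μ₂.1.erase μ₂.2 := by
    intro h
    obtain ⟨x, hx⟩ : (μ₂.2.erase i).Nonempty := by
      rw [← hsplit2]; exact hne1 hℓ hcard
    exact Finset.ne_of_mem_erase h
      (uniq hpart2 (Finset.mem_of_mem_erase h) hmem2 hx (Finset.mem_of_mem_erase hx))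
  have hie : ({i} : Finset (Fin n)) ∉ μ₂.1.erase μ₂.2 := fun h =>
    Finset.ne_of_mem_erase h
      (uniq hpart2 (Finset.mem_of_mem_erase h) hmem2 (Finset.mem_singleton_self i) hi)
  have h2 : insert i μ₁.2 = μ₂.2 := by rw [hsplit2, Finset.insert_erase hi]
  have h1 : (merge μ₁ i).1 = μ₂.1 := by
    show insert (insert i μ₁.2) ((μ₁.1.erase {i}).erase μ₁.2) = μ₂.1
    rw [h2, hsplit1, hsplit2]
    ext b
    simp only [Finset.mem_insert, Finset.mem_erase]
    constructor
    · rintro (rfl | ⟨hbE, ⟨hbi, (rfl | rfl | hb)⟩⟩)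
      · exact hmem2
      · exact absurd rfl hbE
      · exact absurd rfl hbi
      · exact hb.2
    · intro hb
      by_cases hbB : b = μ₂.2
      · exact Or.inl hbB
      have hbS : b ∈ μ₂.1.erase μ₂.2 := Finset.mem_erase.2 ⟨hbB, hb⟩
      exact Or.inr ⟨fun h => hme (h ▸ hbS), fun h => hie (h ▸ hbS),
        Or.inr (Or.inr ⟨hbB, hb⟩)⟩
  exact Prod.ext h1 h2

include hpart2 hmem2 hi hsplit1 hsplit2 hℓ hcard in
lemma swap_fix {j₀ : Fin n} (hj₀ : ({j₀} : Finset (Fin n)) ∈ μ₁.1)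
    (hj₀ne : ({j₀} : Finset (Fin n)) ≠ μ₁.2) (hij : j₀ ≠ i) :
    permAct (Equiv.swap i j₀) μ₁ = μ₁ := by
  have hp1 := part1 hpart2 hmem2 hi hsplit1 hsplit2 hℓ hcard
  have hm1 := hmem1 hsplit1 hsplit2
  have hib := hiblk (i := i) hsplit1
  have hj₀2 : j₀ ∉ μ₁.2 := fun h =>
    hj₀ne (uniq hp1 hj₀ hm1 (Finset.mem_singleton_self j₀) h)
  have hi2 : i ∉ μ₁.2 := fun h =>
    (hine hsplit2) (uniq hp1 hib hm1 (Finset.mem_singleton_self i) h)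
  set τ := Equiv.swap i j₀ with hτ
  have hfix : ∀ (b : Finset (Fin n)), i ∉ b → j₀ ∉ b → b.image τ = b := by
    intro b hbi hbj
    have : ∀ x ∈ b, τ x = x := fun x hx =>
      Equiv.swap_apply_of_ne_of_ne (fun h => hbi (h ▸ hx)) (fun h => hbj (h ▸ hx))
    calc b.image τ = b.image id := Finset.image_congr this
      _ = b := Finset.image_id
  have himg : ∀ b ∈ μ₁.1, b.image τ ∈ μ₁.1 := by
    intro b hb
    by_cases h1 : b = {i}
    · subst h1
      simpa [Finset.image_singleton, hτ, Equiv.swap_apply_left] using hj₀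
    by_cases h2 : b = {j₀}
    · subst h2
      simpa [Finset.image_singleton, hτ, Equiv.swap_apply_right] using hib
    · have hbi : i ∉ b := fun h =>
        h1 (uniq hp1 hb hib h (Finset.mem_singleton_self i))
      have hbj : j₀ ∉ b := fun h =>
        h2 (uniq hp1 hb hj₀ h (Finset.mem_singleton_self j₀))
      rw [hfix b hbi hbj]; exact hb
  have h1 : μ₁.1.image (Finset.image τ) = μ₁.1 := by
    apply Finset.eq_of_subset_of_card_le
    · intro b hb
      rcases Finset.mem_image.1 hb with ⟨a, ha, rfl⟩
      exact himg a ha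
    · rw [Finset.card_image_of_injective _ (Finset.image_injective τ.injective)]
  exact Prod.ext h1 (hfix μ₁.2 hi2 hj₀2)

include hpart2 hmem2 hi hsplit1 hsplit2 hℓ hcard in
lemma merge_mem_orbit₀ {j₀ : Fin n} (hj₀ : ({j₀} : Finset (Fin n)) ∈ μ₁.1)
    (hj₀ne : ({j₀} : Finset (Fin n)) ≠ μ₁.2) : merge μ₁ j₀ ∈ hOrbit μ₂ := by
  rw [mem_hOrbit_iff]
  have hmeq := merge_eq hpart2 hmem2 hi hsplit1 hsplit2 hℓ hcard
  by_cases hij : j₀ = i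
  · subst hij
    exact ⟨1, by rw [permAct_one]; exact hmeq.symm⟩
  · refine ⟨Equiv.swap i j₀, ?_⟩
    calc permAct (Equiv.swap i j₀) μ₂
        = permAct (Equiv.swap i j₀) (merge μ₁ i) := by rw [hmeq]
      _ = merge (permAct (Equiv.swap i j₀) μ₁) (Equiv.swap i j₀ i) := merge_permAct _ _ _
      _ = merge μ₁ j₀ := by
          rw [swap_fix hpart2 hmem2 hi hsplit1 hsplit2 hℓ hcard hj₀ hj₀ne hij,
            Equiv.swap_apply_left]

include hpart2 hmem2 hi hsplit1 hsplit2 hℓ hcard in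
lemma merge_mem_orbit {p : HPart n} (hp : p ∈ hOrbit μ₁) {j : Fin n}
    (hj : ({j} : Finset (Fin n)) ∈ p.1) (hjne : ({j} : Finset (Fin n)) ≠ p.2) :
    merge p j ∈ hOrbit μ₂ := by
  obtain ⟨π, rfl⟩ := mem_hOrbit_iff.1 hp
  have hπj : π (π.symm j) = j := π.apply_symm_apply j
  have himg : Finset.image π {π.symm j} = {j} := by
    rw [Finset.image_singleton, hπj]
  have hj₀ : ({π.symm j} : Finset (Fin n)) ∈ μ₁.1 := by
    rcases Finset.mem_image.1 hj with ⟨b, hb, hbe⟩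
    have : b = {π.symm j} := Finset.image_injective π.injective (by rw [hbe, himg])
    exact this ▸ hb
  have hj₀ne : ({π.symm j} : Finset (Fin n)) ≠ μ₁.2 := by
    intro h
    exact hjne (by rw [← himg, h]; rfl)
  obtain ⟨σ, hσ⟩ := mem_hOrbit_iff.1
    (merge_mem_orbit₀ hpart2 hmem2 hi hsplit1 hsplit2 hℓ hcard hj₀ hj₀ne)
  rw [mem_hOrbit_iff]
  refine ⟨π * σ, ?_⟩
  rw [← permAct_comp, hσ, merge_permAct, hπj]

end Main
end Stmt15

namespace Stmt15
variable {n : ℕ}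

lemma countA (q : HPart n) :
    (Finset.univ.filter fun j : Fin n =>
      ({j} : Finset (Fin n)) ∈ q.1 ∧ ({j} : Finset (Fin n)) ≠ q.2).card
      = (q.1.filter fun b => b.card = 1 ∧ b ≠ q.2).card := by
  apply Finset.card_bij (fun j _ => ({j} : Finset (Fin n)))
  · intro j hj
    rcases Finset.mem_filter.1 hj with ⟨-, h1, h2⟩
    exact Finset.mem_filter.2 ⟨h1, Finset.card_singleton j, h2⟩
  · intro a _ b _ h
    exact Finset.singleton_injective h
  · intro b hb
    rcases Finset.mem_filter.1 hb with ⟨hb1, hc, hne⟩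
    obtain ⟨j, rfl⟩ := Finset.card_eq_one.1 hc
    exact ⟨j, Finset.mem_filter.2 ⟨Finset.mem_univ j, hb1, hne⟩, rfl⟩

lemma countB (π : Equiv.Perm (Fin n)) (q : HPart n) :
    ((permAct π q).1.filter fun b => b.card = 1 ∧ b ≠ (permAct π q).2).card
      = (q.1.filter fun b => b.card = 1 ∧ b ≠ q.2).card := by
  refine (Finset.card_bij (fun b _ => b.image π) ?_ ?_ ?_).symm
  · intro b hb
    rcases Finset.mem_filter.1 hb with ⟨hb1, hc, hne⟩
    refine Finset.mem_filter.2 ⟨Finset.mem_image_of_mem _ hb1, ?_, ?_⟩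
    · rw [Finset.card_image_of_injective _ π.injective, hc]
    · intro h
      exact hne (Finset.image_injective π.injective h)
  · intro a _ b _ h
    exact Finset.image_injective π.injective h
  · intro b hb
    rcases Finset.mem_filter.1 hb with ⟨hb1, hc, hne⟩
    rcases Finset.mem_image.1 hb1 with ⟨a, ha, rfl⟩
    refine ⟨a, Finset.mem_filter.2 ⟨ha, ?_, ?_⟩, rfl⟩
    · rw [← hc, Finset.card_image_of_injective _ π.injective]
    · intro h; subst h; exact hne rfl

end Stmt15

open Stmt15

/-- Orbit size comparison: if the highlighted partition `μ₁` (with highlighted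
`ℓ`-block) is obtained from the highlighted partition `μ₂` by splitting off an
element `i` of the highlighted block of `μ₂`, if `μ₁` has at least `c·n`
non-highlighted singletons, and all blocks of `μ₂` have size at most `D = O(1)`,
then `|M_{ℓ+1}| ≥ Ω(n)·|M_ℓ|`, concretely
`|hOrbit μ₂| ≥ (c·n/(ℓ+1))·|hOrbit μ₁|`. -/
theorem stmt_15 (n k ℓ D : ℕ) (c : ℝ) (hc : 0 < c) (hn : 0 < n)
    (hℓ : 1 ≤ ℓ) (hℓk : ℓ + 1 ≤ k) (hk : 2 ≤ k)
    (μ₂ μ₁ : HPart n)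
    (hpart2 : IsPartitionOf n μ₂.1) (hmem2 : μ₂.2 ∈ μ₂.1)
    (i : Fin n) (hi : i ∈ μ₂.2)
    (hsplit1 : μ₁.1 = insert (μ₂.2.erase i) (insert {i} (μ₂.1.erase μ₂.2)))
    (hsplit2 : μ₁.2 = μ₂.2.erase i)
    (hcard : μ₁.2.card = ℓ)
    (hD : ∀ b ∈ μ₂.1, b.card ≤ D)
    (hsing : c * n ≤ ((μ₁.1.filter (fun b => b.card = 1 ∧ b ≠ μ₁.2)).card : ℝ)) :
    (c * n / (ℓ + 1)) * ((hOrbit μ₁).card : ℝ) ≤ ((hOrbit μ₂).card : ℝ) := by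
  classical
  have hp1 : IsPartitionOf n μ₁.1 := part1 hpart2 hmem2 hi hsplit1 hsplit2 hℓ hcard
  have hm1 : μ₁.2 ∈ μ₁.1 := hmem1 hsplit1 hsplit2
  have hne1' : μ₁.2.Nonempty := hne1 hℓ hcard
  set A : Finset (HPart n × Fin n) := (hOrbit μ₁).biUnion (fun p =>
    (Finset.univ.filter fun j : Fin n =>
      ({j} : Finset (Fin n)) ∈ p.1 ∧ ({j} : Finset (Fin n)) ≠ p.2).image
      (fun j => (p, j))) with hA
  set B : Finset (HPart n × Fin n) := (hOrbit μ₂).biUnion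
    (fun q => q.2.image (fun x => (q, x))) with hB
  have horb1 : ∀ p ∈ hOrbit μ₁, IsPartitionOf n p.1 ∧ p.2 ∈ p.1 ∧ p.2.Nonempty := by
    intro p hp
    obtain ⟨π, rfl⟩ := mem_hOrbit_iff.1 hp
    exact ⟨permAct_partition π hp1, Finset.mem_image_of_mem _ hm1, hne1'.image π⟩
  have hAB : A.card ≤ B.card := by
    apply Finset.card_le_card_of_injOn (fun x => (merge x.1 x.2, x.2))
    · intro x hx
      rcases Finset.mem_biUnion.1 hx with ⟨p, hp, hx'⟩
      rcases Finset.mem_image.1 hx' with ⟨j, hj, rfl⟩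
      rcases Finset.mem_filter.1 hj with ⟨-, hj1, hj2⟩
      refine Finset.mem_biUnion.2 ⟨merge p j,
        merge_mem_orbit hpart2 hmem2 hi hsplit1 hsplit2 hℓ hcard hp hj1 hj2, ?_⟩
      exact Finset.mem_image.2 ⟨j, Finset.mem_insert_self j p.2, rfl⟩
    · intro x hx y hy hxy
      rcases Finset.mem_biUnion.1 hx with ⟨p, hp, hx'⟩
      rcases Finset.mem_image.1 hx' with ⟨j, hj, rfl⟩
      rcases Finset.mem_filter.1 hj with ⟨-, hj1, hj2⟩
      rcases Finset.mem_biUnion.1 hy with ⟨p', hp', hy'⟩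
      rcases Finset.mem_image.1 hy' with ⟨j', hj', rfl⟩
      rcases Finset.mem_filter.1 hj' with ⟨-, hj1', hj2'⟩
      have hjj : j = j' := congrArg Prod.snd hxy
      subst hjj
      have hm : merge p j = merge p' j := congrArg Prod.fst hxy
      obtain ⟨hq1, hq2, hq3⟩ := horb1 p hp
      obtain ⟨hq1', hq2', hq3'⟩ := horb1 p' hp'
      have hpp : p = p' := by
        rw [← merge_recover hq1 hq2 hq3 hj1 hj2, hm,
          merge_recover hq1' hq2' hq3' hj1' hj2']
      rw [hpp]
  have hAcard : A.card
      = (hOrbit μ₁).card * (μ₁.1.filter fun b => b.card = 1 ∧ b ≠ μ₁.2).card := by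
    rw [hA, Finset.card_biUnion]
    · rw [Finset.sum_congr rfl (fun p hp => ?_), Finset.sum_const, smul_eq_mul]
      obtain ⟨π, rfl⟩ := mem_hOrbit_iff.1 hp
      rw [Finset.card_image_of_injective _
        (fun a b h => (congrArg Prod.snd h : a = b)), countA, countB]
    · intro p hp q hq hpq
      rw [Function.onFun, Finset.disjoint_left]
      intro a ha ha'
      rcases Finset.mem_image.1 ha with ⟨j, -, rfl⟩
      rcases Finset.mem_image.1 ha' with ⟨j', -, he⟩
      exact hpq ((congrArg Prod.fst he) : q = p).symm
  have hBcard : B.card = (hOrbit μ₂).card * (ℓ + 1) := by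
    rw [hB, Finset.card_biUnion]
    · rw [Finset.sum_congr rfl (fun q hq => ?_), Finset.sum_const, smul_eq_mul]
      obtain ⟨π, rfl⟩ := mem_hOrbit_iff.1 hq
      rw [Finset.card_image_of_injective _
        (fun a b h => (congrArg Prod.snd h : a = b))]
      show (μ₂.2.image π).card = ℓ + 1
      rw [Finset.card_image_of_injective _ π.injective]
      have := Finset.card_erase_add_one hi
      rw [← hsplit2, hcard] at this
      omega
    · intro p hp q hq hpq
      rw [Function.onFun, Finset.disjoint_left]
      intro a ha ha'
      rcases Finset.mem_image.1 ha with ⟨j, -, rfl⟩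
      rcases Finset.mem_image.1 ha' with ⟨j', -, he⟩
      exact hpq ((congrArg Prod.fst he) : q = p).symm
  have key : c * n * ((hOrbit μ₁).card : ℝ) ≤ ((hOrbit μ₂).card : ℝ) * ((ℓ : ℝ) + 1) := by
    calc c * n * ((hOrbit μ₁).card : ℝ)
        ≤ ((μ₁.1.filter fun b => b.card = 1 ∧ b ≠ μ₁.2).card : ℝ)
            * ((hOrbit μ₁).card : ℝ) :=
          mul_le_mul_of_nonneg_right hsing (Nat.cast_nonneg _)
      _ = (A.card : ℝ) := by rw [hAcard]; push_cast; ring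
      _ ≤ (B.card : ℝ) := Nat.cast_le.2 hAB
      _ = ((hOrbit μ₂).card : ℝ) * ((ℓ : ℝ) + 1) := by rw [hBcard]; push_cast; ring
  have hpos : (0 : ℝ) < (ℓ : ℝ) + 1 := by positivity
  rw [div_mul_eq_mul_div, div_le_iff₀ hpos]
  exact key.trans_eq rfl
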